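/- Suppose (X_j)_{j≥1} and Y are square-integrable, the X_j admit the SOE representation X_j = M + R_j (R_j mean-zero, pairwise uncorrelated, uncorrelated with M), and Y is co-exchangeable with the X_j in the sense that Cov(Y, X_j) = c is the same for all j. Then Cov(Y, R_j) = Cov(Y, X_j) - Cov(Y, M) is the same for all j, and if additionally Cov(Y, R_j) = 0 for all j, then Cov(Y, D_n) w = Cov(Y, M) (1^T w) for any vector of weights w, where D_n = (X_1,...,X_n) and 1 is the all-ones vector; in particular Cov(Y, E_{D_n}[M]) = Cov(Y, M) · (sum of the Bayes linear weights). -/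

import Mathlib

open MeasureTheory Filter

noncomputable def mean {Ω : Type*} [MeasurableSpace Ω] (μ : Measure Ω) (X : Ω → ℝ) : ℝ :=
  ∫ ω, X ω ∂μ

noncomputable def cov {Ω : Type*} [MeasurableSpace Ω] (μ : Measure Ω) (X Y : Ω → ℝ) : ℝ :=
  ∫ ω, (X ω - mean μ X) * (Y ω - mean μ Y) ∂μ

noncomputable def var {Ω : Type*} [MeasurableSpace Ω] (μ : Measure Ω) (X : Ω → ℝ) : ℝ :=
  cov μ X X

noncomputable def covMat {Ω : Type*} [MeasurableSpace Ω] (μ : Measure Ω) {m : ℕ}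
    (G : Fin m → Ω → ℝ) : Matrix (Fin m) (Fin m) ℝ :=
  Matrix.of fun i j => cov μ (G i) (G j)

/-- Bayes linear rule: `E[X] + Cov(X,G) Var(G)⁻¹ (G - E[G])`. -/
noncomputable def blRule {Ω : Type*} [MeasurableSpace Ω] (μ : Measure Ω) {m : ℕ}
    (X : Ω → ℝ) (G : Fin m → Ω → ℝ) : Ω → ℝ :=
  fun ω => mean μ X +
    ∑ i, ∑ j, cov μ X (G i) * (covMat μ G)⁻¹ i j * (G j ω - mean μ (G j))

section Helpers

variable {Ω : Type*} [MeasurableSpace Ω] {μ : Measure Ω} [IsProbabilityMeasure μ]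

lemma my_int_mul {f g : Ω → ℝ} (hf : MemLp f 2 μ) (hg : MemLp g 2 μ) :
    Integrable (fun ω => f ω * g ω) μ := by
  have hpq : (1 : ENNReal) / 1 = 1 / 2 + 1 / 2 := by
    rw [ENNReal.div_add_div_same, one_add_one_eq_two,
      ENNReal.div_self (by norm_num) (by norm_num),
      ENNReal.div_self (by norm_num) (by norm_num)]
  have h : MemLp (f • g) 1 μ := by
    haveI : ENNReal.HolderTriple 2 2 1 := ⟨by rw [ENNReal.inv_two_add_inv_two, inv_one]⟩
    exact hg.smul hf
  simpa [Pi.smul_apply, smul_eq_mul, Pi.mul_def] using h.integrable le_rfl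

lemma my_mean_const (a : ℝ) : mean μ (fun _ : Ω => a) = a := by
  simp [mean]

lemma my_cov_symm (X Z : Ω → ℝ) : cov μ X Z = cov μ Z X := by
  simp only [cov]
  congr 1; funext ω; ring

lemma my_cov_add_right {X Z W : Ω → ℝ} (hX : MemLp X 2 μ) (hZ : MemLp Z 2 μ)
    (hW : MemLp W 2 μ) :
    cov μ X (fun ω => Z ω + W ω) = cov μ X Z + cov μ X W := by
  have hZi : Integrable Z μ := hZ.integrable one_le_two
  have hWi : Integrable W μ := hW.integrable one_le_two
  have hm : mean μ (fun ω => Z ω + W ω) = mean μ Z + mean μ W := by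
    simpa [mean] using integral_add hZi hWi
  have h1 : Integrable (fun ω => (X ω - mean μ X) * (Z ω - mean μ Z)) μ :=
    my_int_mul (hX.sub (memLp_const _)) (hZ.sub (memLp_const _))
  have h2 : Integrable (fun ω => (X ω - mean μ X) * (W ω - mean μ W)) μ :=
    my_int_mul (hX.sub (memLp_const _)) (hW.sub (memLp_const _))
  have : cov μ X (fun ω => Z ω + W ω) =
      ∫ ω, ((X ω - mean μ X) * (Z ω - mean μ Z)
        + (X ω - mean μ X) * (W ω - mean μ W)) ∂μ := by
    rw [cov, hm]
    congr 1; funext ω; ring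
  rw [this, integral_add h1 h2]; rfl

lemma my_cov_const_right (X : Ω → ℝ) (a : ℝ) : cov μ X (fun _ => a) = 0 := by
  simp [cov, my_mean_const]

lemma my_cov_const_mul_right (X Z : Ω → ℝ) (a : ℝ) :
    cov μ X (fun ω => a * Z ω) = a * cov μ X Z := by
  have hm : mean μ (fun ω => a * Z ω) = a * mean μ Z := by
    simpa [mean] using integral_const_mul a Z
  simp only [cov, hm]
  rw [← integral_const_mul]
  congr 1; funext ω; ring

lemma my_cov_add_const_right {X Z : Ω → ℝ} (hZ : Integrable Z μ) (a : ℝ) :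
    cov μ X (fun ω => Z ω + a) = cov μ X Z := by
  have hm : mean μ (fun ω => Z ω + a) = mean μ Z + a := by
    simpa [mean] using integral_add hZ (integrable_const a)
  rw [cov, hm]
  congr 1; funext ω; ring_nf

lemma my_cov_sum_right {ι : Type*} (X : Ω → ℝ) (s : Finset ι) (G : ι → Ω → ℝ)
    (hX : MemLp X 2 μ) (hG : ∀ i ∈ s, MemLp (G i) 2 μ) :
    cov μ X (fun ω => ∑ i ∈ s, G i ω) = ∑ i ∈ s, cov μ X (G i) := by
  classical
  induction s using Finset.cons_induction with
  | empty => simpa using my_cov_const_right (μ := μ) X 0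
  | cons i s hi ih =>
    have hGi := hG i (Finset.mem_cons_self i s)
    have hGs : MemLp (fun ω => ∑ j ∈ s, G j ω) 2 μ :=
      memLp_finset_sum s fun j hj => hG j (Finset.mem_cons_of_mem hj)
    simp only [Finset.sum_cons]
    rw [my_cov_add_right hX hGi hGs, ih fun j hj => hG j (Finset.mem_cons_of_mem hj)]

end Helpers

theorem stmt17 {Ω : Type*} [MeasurableSpace Ω] (μ : Measure Ω) [IsProbabilityMeasure μ]
    (M Y : Ω → ℝ) (R : ℕ → Ω → ℝ) (c : ℝ) {n : ℕ}
    (hM : MemLp M 2 μ) (hY : MemLp Y 2 μ) (hR : ∀ j, MemLp (R j) 2 μ)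
    (hmean : ∀ j, mean μ (R j) = 0)
    (hRR : ∀ j k, j ≠ k → cov μ (R j) (R k) = 0)
    (hMR : ∀ j, cov μ M (R j) = 0)
    (hco : ∀ j, cov μ Y (fun ω => M ω + R j ω) = c) :
    (∀ j k, cov μ Y (R j) = cov μ Y (R k)) ∧
    (∀ j, cov μ Y (R j) = cov μ Y (fun ω => M ω + R j ω) - cov μ Y M) ∧
    ((∀ j, cov μ Y (R j) = 0) → ∀ w : Fin n → ℝ,
      ∑ i, cov μ Y (fun ω => M ω + R i.val ω) * w i = cov μ Y M * ∑ i, w i) ∧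
    ((∀ j, cov μ Y (R j) = 0) →
      cov μ Y (blRule μ M (fun i : Fin n => fun ω => M ω + R i.val ω)) =
        cov μ Y M * ∑ i : Fin n, ∑ j : Fin n,
          (covMat μ (fun i : Fin n => fun ω => M ω + R i.val ω))⁻¹ i j *
            cov μ (fun ω => M ω + R j.val ω) M) := by
  have hsplit : ∀ j, cov μ Y (fun ω => M ω + R j ω) = cov μ Y M + cov μ Y (R j) :=
    fun j => my_cov_add_right hY hM (hR j)
  have part2 : ∀ j, cov μ Y (R j) = cov μ Y (fun ω => M ω + R j ω) - cov μ Y M := by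
    intro j; rw [hsplit j]; ring
  have part1 : ∀ j k, cov μ Y (R j) = cov μ Y (R k) := by
    intro j k; rw [part2 j, part2 k, hco j, hco k]
  -- notation for the class members
  set G : Fin n → Ω → ℝ := fun i => fun ω => M ω + R i.val ω with hGdef
  have hGL2 : ∀ i : Fin n, MemLp (G i) 2 μ := fun i => hM.add (hR i.val)
  have part3 : (∀ j, cov μ Y (R j) = 0) → ∀ w : Fin n → ℝ,
      ∑ i, cov μ Y (fun ω => M ω + R i.val ω) * w i = cov μ Y M * ∑ i, w i := by
    intro hz w
    rw [Finset.mul_sum]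
    refine Finset.sum_congr rfl fun i _ => ?_
    rw [hsplit i.val, hz i.val, add_zero]
  refine ⟨part1, part2, part3, ?_⟩
  intro hz
  have hcovG : ∀ i : Fin n, cov μ Y (G i) = cov μ Y M := by
    intro i; rw [hGdef]; simp only []
    rw [hsplit i.val, hz i.val, add_zero]
  set A := covMat μ G with hA
  -- compute cov of Y with the Bayes linear rule
  have hterm : ∀ i j : Fin n,
      MemLp (fun ω => cov μ M (G i) * A⁻¹ i j * (G j ω - mean μ (G j))) 2 μ := by
    intro i j
    exact ((hGL2 j).sub (memLp_const _)).const_mul _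
  have hinner : ∀ i : Fin n,
      MemLp (fun ω => ∑ j, cov μ M (G i) * A⁻¹ i j * (G j ω - mean μ (G j))) 2 μ :=
    fun i => memLp_finset_sum _ fun j _ => hterm i j
  have hS : MemLp (fun ω => ∑ i, ∑ j,
      cov μ M (G i) * A⁻¹ i j * (G j ω - mean μ (G j))) 2 μ :=
    memLp_finset_sum _ fun i _ => hinner i
  have hbl : cov μ Y (blRule μ M G) =
      ∑ i, ∑ j, cov μ M (G i) * A⁻¹ i j * cov μ Y (G j) := by
    have h0 : blRule μ M G = fun ω =>
        (∑ i, ∑ j, cov μ M (G i) * A⁻¹ i j * (G j ω - mean μ (G j))) + mean μ M := by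
      funext ω; rw [blRule]; ring
    rw [h0, my_cov_add_const_right (hS.integrable one_le_two)]
    rw [my_cov_sum_right Y _ _ hY fun i _ => hinner i]
    refine Finset.sum_congr rfl fun i _ => ?_
    rw [my_cov_sum_right Y _ _ hY fun j _ => hterm i j]
    refine Finset.sum_congr rfl fun j _ => ?_
    rw [my_cov_const_mul_right]
    have h1 : cov μ Y (fun ω => G j ω + -(mean μ (G j))) = cov μ Y (G j) :=
      my_cov_add_const_right ((hGL2 j).integrable one_le_two) _
    simp only [sub_eq_add_neg]
    rw [h1]
    try ring
  -- symmetry of the inverse covariance matrix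
  have hAsymm : Matrix.transpose A = A := by
    rw [hA]
    ext i j
    simp only [Matrix.transpose_apply, covMat, Matrix.of_apply]
    exact my_cov_symm (G j) (G i)
  have hinv_symm : ∀ i j : Fin n, A⁻¹ i j = A⁻¹ j i := by
    intro i j
    have h := Matrix.transpose_nonsing_inv A
    rw [hAsymm] at h
    calc A⁻¹ i j = Matrix.transpose A⁻¹ j i := rfl
      _ = A⁻¹ j i := by rw [h]
  rw [hbl]
  simp only [hcovG]
  rw [Finset.mul_sum]
  rw [Finset.sum_comm]
  refine Finset.sum_congr rfl fun j _ => ?_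
  rw [Finset.mul_sum]
  refine Finset.sum_congr rfl fun i _ => ?_
  rw [hinv_symm j i, my_cov_symm (G i) M]
  ring
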